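/- Let n be even and let T be the linear operator on homogeneous degree-n polynomials over ℚ given by (T·P)(X,Y) = P(-Y, X+Y) (the action of t = [[0,-1],[1,1]]). Then T³ = 1 and the dimension of the fixed space ker(T - 1) equals (n + 1 + 2·tr(T))/3. -/

import Mathlib

open MvPolynomial Module

open Module LinearMap TensorProduct

noncomputable section

private def ww : ℂ := ⟨-1/2, Real.sqrt 3 / 2⟩

private lemma hww2 : ww^2 = -1 - ww := by
  have h3 : Real.sqrt 3 * Real.sqrt 3 = 3 := Real.mul_self_sqrt (by norm_num)
  apply Complex.ext <;>
    simp [ww, pow_two, Complex.mul_re, Complex.mul_im] <;> nlinarith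

private lemma hww3 : ww^3 = 1 := by linear_combination (ww - 1) * hww2

private lemma hwwim : ww.im ≠ 0 := by
  have : (0:ℝ) < Real.sqrt 3 := Real.sqrt_pos.mpr (by norm_num)
  simp only [ww]
  positivity

theorem key_lemma {V : Type*} [AddCommGroup V] [Module ℚ V] [FiniteDimensional ℚ V]
    (f : Module.End ℚ V) (hf : f ^ 3 = 1) :
    (3 : ℚ) * (finrank ℚ (LinearMap.ker (f - 1)) : ℚ)
      = (finrank ℚ V : ℚ) + 2 * LinearMap.trace ℚ V f := by
  classical
  set p : Module.End ℚ V := (3:ℚ)⁻¹ • (1 + f + f^2) with hp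
  have hfp : (f - 1) * p = 0 := by
    have h1 : (f - 1) * (1 + f + f^2) = f^3 - 1 := by noncomm_ring
    rw [hp, mul_smul_comm, h1, hf, sub_self, smul_zero]
  have hproj : IsProj (LinearMap.ker (f - 1)) p := by
    constructor
    · intro x
      rw [LinearMap.mem_ker, ← Module.End.mul_apply, hfp, LinearMap.zero_apply]
    · intro x hx
      have hfx : f x = x := by
        have := LinearMap.mem_ker.mp hx
        rw [LinearMap.sub_apply, Module.End.one_apply, sub_eq_zero] at this
        exact this
      have hf2x : (f^2) x = x := by
        rw [pow_two, Module.End.mul_apply, hfx, hfx]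
      rw [hp]
      simp only [LinearMap.smul_apply, LinearMap.add_apply, Module.End.one_apply, hfx, hf2x]
      rw [show x + x + x = (3:ℚ) • x by module, smul_smul]
      norm_num
  have htrp : LinearMap.trace ℚ V p = (finrank ℚ (LinearMap.ker (f-1)) : ℚ) := hproj.trace
  -- base change to ℂ
  set F : Module.End ℂ (ℂ ⊗[ℚ] V) := f.baseChange ℂ with hFdef
  have hF : F^3 = 1 := by
    rw [hFdef, ← LinearMap.baseChange_pow, hf, LinearMap.baseChange_one]
  have hF4 : F^4 = F := by
    rw [show (4:ℕ) = 3+1 from rfl, pow_succ, hF, one_mul]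
  set P : ℂ → Module.End ℂ (ℂ ⊗[ℚ] V) := fun u => (3:ℂ)⁻¹ • (1 + u^2 • F + u • F^2)
    with hPdef
  have hPP : ∀ u : ℂ, u^3 = 1 → (P u) * (P u) = P u := by
    intro u hu
    have hu4 : u^4 = u := by linear_combination u * hu
    set a := u^2 • F with ha
    set b := u • F^2 with hb
    have haa : a * a = b := by
      rw [ha, hb, smul_mul_smul_comm, ← pow_add, ← pow_two]
      norm_num [hu4]
    have hab : a * b = 1 := by
      rw [ha, hb, smul_mul_smul_comm, ← pow_succ, ← pow_succ']
      norm_num [hu, hF]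
    have hba : b * a = 1 := by
      rw [ha, hb, smul_mul_smul_comm, ← pow_succ', ← pow_succ]
      norm_num [hu, hF]
    have hbb : b * b = a := by
      rw [ha, hb, smul_mul_smul_comm, ← pow_two, ← pow_add]
      norm_num [hF4]
    have hQ : (1 + a + b) * (1 + a + b) = (3:ℂ) • (1 + a + b) := by
      simp only [mul_add, add_mul, one_mul, mul_one, haa, hab, hba, hbb]
      module
    calc P u * P u = ((3:ℂ)⁻¹ * (3:ℂ)⁻¹) • ((1 + a + b) * (1 + a + b)) := by
          rw [hPdef]; exact smul_mul_smul_comm _ _ _ _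
      _ = ((3:ℂ)⁻¹ * (3:ℂ)⁻¹) • ((3:ℂ) • (1 + a + b)) := by rw [hQ]
      _ = P u := by rw [smul_smul, hPdef]; norm_num [ha, hb]
  have hIsProj : ∀ u : ℂ, u^3 = 1 → IsProj (LinearMap.range (P u)) (P u) := by
    intro u hu
    constructor
    · intro x; exact LinearMap.mem_range_self _ x
    · rintro x ⟨y, rfl⟩
      rw [← Module.End.mul_apply, hPP u hu]
  have hpbc : p.baseChange ℂ = P 1 := by
    rw [hp, hPdef]
    simp only [LinearMap.baseChange_smul, LinearMap.baseChange_add, LinearMap.baseChange_one,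
      LinearMap.baseChange_pow, one_pow, one_smul]
    rw [← algebraMap_smul (R := ℚ) ℂ ((3:ℚ)⁻¹)]
    norm_num [hFdef]
  have hsum : P 1 + P ww + P (ww^2) = 1 := by
    rw [hPdef]
    simp only [one_pow, one_smul]
    match_scalars
    · ring
    · linear_combination ((3:ℂ)⁻¹ * (ww^2 - ww + 1)) * hww2
    · linear_combination (3:ℂ)⁻¹ * hww2
  have hfeq : P 1 + ww • P ww + ww^2 • P (ww^2) = F := by
    rw [hPdef]
    simp only [one_pow, one_smul]
    match_scalars
    · linear_combination (3:ℂ)⁻¹ * hww2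
    · linear_combination ((3:ℂ)⁻¹ * ((ww-1)*(ww^3+2))) * hww2
    · linear_combination ((3:ℂ)⁻¹ * (ww^2 - ww + 1)) * hww2
  -- traces
  set A : ℕ := finrank ℚ (LinearMap.ker (f - 1)) with hA
  set B : ℕ := finrank ℂ (LinearMap.range (P ww)) with hB
  set C : ℕ := finrank ℂ (LinearMap.range (P (ww^2))) with hC
  have hww6 : (ww^2)^3 = 1 := by rw [← pow_mul, show 2*3 = 3*2 from rfl, pow_mul, hww3, one_pow]
  have htr1 : LinearMap.trace ℂ _ (P 1) = ((A:ℚ):ℂ) := by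
    rw [← hpbc, LinearMap.trace_baseChange, htrp]
    simp [algebraMap]
  have htrB : LinearMap.trace ℂ _ (P ww) = (B:ℂ) := (hIsProj ww hww3).trace
  have htrC : LinearMap.trace ℂ _ (P (ww^2)) = (C:ℂ) := (hIsProj _ hww6).trace
  set t : ℚ := LinearMap.trace ℚ V f with ht
  have htrF : LinearMap.trace ℂ _ F = ((t:ℚ):ℂ) := by
    rw [hFdef, LinearMap.trace_baseChange]
    simp [algebraMap]
    exact ht.symm
  have e1 : ((A:ℚ):ℂ) + B + C = ((finrank ℚ V : ℚ):ℂ) := by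
    have := congrArg (LinearMap.trace ℂ (ℂ ⊗[ℚ] V)) hsum
    rw [map_add, map_add, htr1, htrB, htrC] at this
    rw [this, show (1 : Module.End ℂ (ℂ ⊗[ℚ] V)) = (1 : Module.End ℚ V).baseChange ℂ from
      (LinearMap.baseChange_one _ _).symm]
    rw [LinearMap.trace_baseChange, LinearMap.trace_one]
    simp [algebraMap]
  have e2 : ((A:ℚ):ℂ) + ww * B + ww^2 * C = ((t:ℚ):ℂ) := by
    have hsm : ∀ (u : ℂ) (g : Module.End ℂ (ℂ ⊗[ℚ] V)),
        LinearMap.trace ℂ _ (u • g) = u * LinearMap.trace ℂ _ g := fun u g => by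
      rw [map_smul, smul_eq_mul]
    have := congrArg (LinearMap.trace ℂ (ℂ ⊗[ℚ] V)) hfeq
    rw [map_add, map_add, htr1, hsm ww (P ww), hsm (ww^2) (P (ww^2)), htrB, htrC, htrF] at this
    rw [← this]
  -- extract real and imaginary parts
  have e2' : ((A:ℚ):ℂ) + ww * B + (-1 - ww) * C = ((t:ℚ):ℂ) := by
    rw [← hww2]; exact e2
  have him := congrArg Complex.im e2'
  simp only [Complex.add_im, Complex.mul_im, Complex.ratCast_im, Complex.natCast_im,
    Complex.natCast_re, Complex.sub_im, Complex.neg_im, Complex.one_im, Complex.sub_re,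
    Complex.neg_re, Complex.one_re, mul_zero, zero_add, add_zero, neg_zero] at him
  have hBC : (B:ℝ) = (C:ℝ) := by
    have h0 : ww.im * B - ww.im * C = 0 := by linarith [him]
    have := mul_eq_zero.mp (by linarith [h0] : ww.im * ((B:ℝ) - C) = 0)
    rcases this with h | h
    · exact absurd h hwwim
    · linarith
  have hre := congrArg Complex.re e2'
  simp only [Complex.add_re, Complex.mul_re, Complex.ratCast_re, Complex.natCast_im,
    Complex.natCast_re, Complex.sub_re, Complex.neg_re, Complex.one_re, Complex.sub_im,
    Complex.neg_im, Complex.one_im, mul_zero, zero_add, add_zero, neg_zero, sub_zero] at hre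
  have e1' := congrArg Complex.re e1
  simp only [Complex.add_re, Complex.ratCast_re, Complex.natCast_re] at e1'
  have hwwre : ww.re = -1/2 := rfl
  rw [hwwre] at hre
  -- final arithmetic over ℝ
  have goalR : (3:ℝ) * (A:ℝ) = (finrank ℚ V : ℝ) + 2 * (t:ℝ) := by
    have hAq : ((A:ℚ):ℝ) = (A:ℝ) := by push_cast; ring
    push_cast at e1' hre
    linarith [hre, e1', hBC]
  rw [← Rat.cast_inj (α := ℝ)]
  push_cast
  push_cast at goalR
  linarith [goalR]

open MvPolynomial

private lemma deg2 (d : Fin 2 →₀ ℕ) : d.degree = d 0 + d 1 := by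
  rw [Finsupp.degree_apply]
  rw [show (∑ i ∈ d.support, d i) = ∑ i : Fin 2, d i from
    (Finset.sum_subset (Finset.subset_univ _) (fun x _ hx =>
      Finsupp.notMem_support_iff.mp hx))]
  rw [Fin.sum_univ_two]

private def degEquiv (n : ℕ) :
    {d : Fin 2 →₀ ℕ // d ∈ {d : Fin 2 →₀ ℕ | d.degree = n}} ≃ Fin (n+1) where
  toFun d := ⟨d.1 0, by
    have h := d.2
    simp only [Set.mem_setOf_eq] at h
    have := Finsupp.le_degree 0 d.1
    omega⟩
  invFun k := ⟨Finsupp.single 0 (k:ℕ) + Finsupp.single 1 (n - k), by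
    have h2 := deg2 (Finsupp.single 0 (k:ℕ) + Finsupp.single 1 (n - (k:ℕ)))
    have hk := k.2
    simp only [Set.mem_setOf_eq]
    rw [h2]
    simp [Finsupp.single_apply]
    omega⟩
  left_inv d := by
    apply Subtype.ext
    have h := d.2
    simp only [Set.mem_setOf_eq] at h
    have h2 := deg2 d.1
    rw [h] at h2
    ext i
    fin_cases i <;> simp [Finsupp.single_apply] <;> omega
  right_inv k := by
    apply Fin.ext
    simp [Finsupp.single_apply]

private lemma finrank_homog (n : ℕ) :
    finrank ℚ (homogeneousSubmodule (Fin 2) ℚ n) = n + 1 := by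
  classical
  have hM : homogeneousSubmodule (Fin 2) ℚ n
      = restrictSupport ℚ {d : Fin 2 →₀ ℕ | d.degree = n} :=
    homogeneousSubmodule_eq_finsupp_supported (Fin 2) ℚ n
  rw [hM]
  haveI : Fintype {d : Fin 2 →₀ ℕ | d.degree = n} := Fintype.ofEquiv _ (degEquiv n).symm
  haveI := Module.Finite.of_basis (basisRestrictSupport ℚ {d : Fin 2 →₀ ℕ | d.degree = n})
  rw [finrank_eq_card_basis (basisRestrictSupport ℚ {d : Fin 2 →₀ ℕ | d.degree = n})]
  rw [Fintype.card_congr (degEquiv n), Fintype.card_fin]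

private instance homog_fd (n : ℕ) :
    FiniteDimensional ℚ (homogeneousSubmodule (Fin 2) ℚ n) := by
  classical
  have hM : homogeneousSubmodule (Fin 2) ℚ n
      = restrictSupport ℚ {d : Fin 2 →₀ ℕ | d.degree = n} :=
    homogeneousSubmodule_eq_finsupp_supported (Fin 2) ℚ n
  rw [hM]
  haveI : Fintype {d : Fin 2 →₀ ℕ | d.degree = n} := Fintype.ofEquiv _ (degEquiv n).symm
  exact Module.Finite.of_basis (basisRestrictSupport ℚ {d : Fin 2 →₀ ℕ | d.degree = n})

private lemma comp3 :
    ((aeval ![-X 1, X 0 + X 1] : MvPolynomial (Fin 2) ℚ →ₐ[ℚ] MvPolynomial (Fin 2) ℚ).comp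
      ((aeval ![-X 1, X 0 + X 1]).comp (aeval ![-X 1, X 0 + X 1])))
    = aeval ![-X 0, -X 1] := by
  apply MvPolynomial.algHom_ext
  intro i
  fin_cases i <;>
    simp [AlgHom.comp_apply, aeval_X, Matrix.cons_val_zero, Matrix.cons_val_one, Matrix.head_cons]
    <;> ring

private lemma neg_aeval {n : ℕ} (he : Even n) (P : MvPolynomial (Fin 2) ℚ)
    (hP : P.IsHomogeneous n) : aeval ![-X 0, -X 1] P = P := by
  have hfun : (![-X 0, -X 1] : Fin 2 → MvPolynomial (Fin 2) ℚ) = fun i => - X i := by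
    funext i; fin_cases i <;> simp
  rw [hfun]
  have key : (aeval fun i => - X i) P = ∑ d ∈ P.support, monomial d (coeff d P) := by
    conv_lhs => rw [P.as_sum]
    rw [map_sum]
    apply Finset.sum_congr rfl
    intro d hd
    have hdeg : d.degree = n := by
      by_contra hne
      exact (MvPolynomial.mem_support_iff.mp hd) (hP.coeff_eq_zero hne)
    rw [aeval_monomial]
    simp only [Finsupp.prod]
    have hprod : (∏ i ∈ d.support, (-X i : MvPolynomial (Fin 2) ℚ) ^ d i)
        = (∏ i ∈ d.support, (-1 : MvPolynomial (Fin 2) ℚ) ^ d i)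
          * ∏ i ∈ d.support, (X i : MvPolynomial (Fin 2) ℚ) ^ d i := by
      rw [← Finset.prod_mul_distrib]
      apply Finset.prod_congr rfl
      intro i _
      rw [neg_pow]
    rw [hprod, Finset.prod_pow_eq_pow_sum]
    rw [show (∑ i ∈ d.support, d i) = d.degree from rfl, hdeg, he.neg_one_pow, one_mul]
    rw [monomial_eq]
    simp [algebraMap_eq, Finsupp.prod]
  rw [key, ← P.as_sum]

open MvPolynomial

theorem dim_fixed_space_T (n : ℕ) (he : Even n)
    (h : ∀ P ∈ homogeneousSubmodule (Fin 2) ℚ n,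
      (aeval ![-X 1, X 0 + X 1] :
        MvPolynomial (Fin 2) ℚ →ₐ[ℚ] MvPolynomial (Fin 2) ℚ).toLinearMap P ∈
        homogeneousSubmodule (Fin 2) ℚ n) :
    (aeval ![-X 1, X 0 + X 1] :
        MvPolynomial (Fin 2) ℚ →ₐ[ℚ] MvPolynomial (Fin 2) ℚ).toLinearMap.restrict h ^ 3 = 1 ∧
    (3 * finrank ℚ
        (LinearMap.ker
          ((aeval ![-X 1, X 0 + X 1] :
            MvPolynomial (Fin 2) ℚ →ₐ[ℚ] MvPolynomial (Fin 2) ℚ).toLinearMap.restrict h - 1)) : ℚ)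
      = n + 1 + 2 * LinearMap.trace ℚ _
          ((aeval ![-X 1, X 0 + X 1] :
            MvPolynomial (Fin 2) ℚ →ₐ[ℚ] MvPolynomial (Fin 2) ℚ).toLinearMap.restrict h) := by
  classical
  set φ : MvPolynomial (Fin 2) ℚ →ₐ[ℚ] MvPolynomial (Fin 2) ℚ := aeval ![-X 1, X 0 + X 1]
    with hφ
  have hpow : (φ.toLinearMap.restrict h) ^ 3 = 1 := by
    apply LinearMap.ext
    intro x
    apply Subtype.ext
    have hx3 : ((φ.toLinearMap.restrict h ^ 3) x : MvPolynomial (Fin 2) ℚ)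
        = φ (φ (φ (x : MvPolynomial (Fin 2) ℚ))) := by
      rw [show ((3:ℕ)) = 2 + 1 from rfl, pow_succ, pow_succ, pow_one]
      rw [Module.End.mul_apply, Module.End.mul_apply]
      rw [LinearMap.restrict_coe_apply, LinearMap.restrict_coe_apply,
        LinearMap.restrict_coe_apply]
      rfl
    rw [hx3]
    have hc := DFunLike.congr_fun comp3 (x : MvPolynomial (Fin 2) ℚ)
    simp only [AlgHom.comp_apply] at hc
    rw [hφ, hc, neg_aeval he _ ((mem_homogeneousSubmodule n _).mp x.2)]
    rfl
  refine ⟨hpow, ?_⟩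
  have hk := key_lemma (φ.toLinearMap.restrict h) hpow
  rw [finrank_homog n] at hk
  rw [hk]
  push_cast
  ring
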